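/- Let α < 0 be a real number with f(α) + g(α) > 0 (equivalently, α < x1 where x1 ≈ −5.46343 is the root of f+g; note that then f(α) > 0 automatically since g(α) < 0 for α < 0). Then for every length vector L with square count n(L) = n ≥ 3: (a) if n is odd, Ψ_α(L) ≤ f(α)·(n−1)/2, with equality if and only if L = (3,3,…,3) with (n−1)/2 entries; (b) if n is even, Ψ_α(L) ≤ f(α)·(n/2) + g(α), with equality if and only if L = (2,3,3,…,3) or L = (3,…,3,2), i.e., L has n/2 entries, exactly one of which equals 2, that entry is the first or the last, and all other entries equal 3. (This is the third part of Proposition 4: for α < x1 the chain Z_n† uniquely maximizes χ_α over Ω_n.) -/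

import Mathlib

noncomputable def f (α : ℝ) : ℝ := 2 * (5:ℝ) ^ α - 6 * (6:ℝ) ^ α + 4 * (7:ℝ) ^ α
noncomputable def g (α : ℝ) : ℝ := 2 * (6:ℝ) ^ α - (5:ℝ) ^ α - (7:ℝ) ^ α
noncomputable def h (α : ℝ) : ℝ := 5 * (6:ℝ) ^ α - 2 * (5:ℝ) ^ α - 4 * (7:ℝ) ^ α + (8:ℝ) ^ α

/-- A length vector: a nonempty list of segment lengths, each at least 2. -/
def LengthVector (L : List ℕ) : Prop := L ≠ [] ∧ ∀ l ∈ L, 2 ≤ l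

/-- Square count of a length vector: `l₁ + ⋯ + l_s − (s − 1)`. -/
def nSq (L : List ℕ) : ℕ := L.sum - (L.length - 1)

/-- Number of external (first or last) entries equal to 2. -/
def e2 (L : List ℕ) : ℕ :=
  ((Finset.range L.length).filter
    (fun j => (j = 0 ∨ j = L.length - 1) ∧ L.getD j 0 = 2)).card

/-- Number of internal entries (neither first nor last) equal to 2. -/
def i2 (L : List ℕ) : ℕ :=
  ((Finset.range L.length).filter
    (fun j => j ≠ 0 ∧ j ≠ L.length - 1 ∧ L.getD j 0 = 2)).card

/-- The weight Ψ_α(L) = f(α)·s + g(α)·e₂(L) + h(α)·i₂(L). -/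
noncomputable def psi (α : ℝ) (L : List ℕ) : ℝ :=
  f α * L.length + g α * e2 L + h α * i2 L

section Helpers

lemma rpow_base_lt {a b α : ℝ} (ha : 0 < a) (hab : a < b) (hα : α < 0) :
    b ^ α < a ^ α := by
  rw [Real.rpow_def_of_pos ha, Real.rpow_def_of_pos (ha.trans hab)]
  exact Real.exp_lt_exp.2 (mul_lt_mul_of_neg_right (Real.log_lt_log ha hab) hα)

lemma g_neg {α : ℝ} (hα : α < 0) : g α < 0 := by
  have h5 : (0:ℝ) < (5:ℝ)^α := Real.rpow_pos_of_pos (by norm_num) α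
  have h6 : (0:ℝ) < (6:ℝ)^α := Real.rpow_pos_of_pos (by norm_num) α
  have h7 : (0:ℝ) < (7:ℝ)^α := Real.rpow_pos_of_pos (by norm_num) α
  have h36 : (6:ℝ)^α * (6:ℝ)^α = (36:ℝ)^α := by
    rw [← Real.mul_rpow (by norm_num) (by norm_num)]; norm_num
  have h35 : (5:ℝ)^α * (7:ℝ)^α = (35:ℝ)^α := by
    rw [← Real.mul_rpow (by norm_num) (by norm_num)]; norm_num
  have key : (6:ℝ)^α * (6:ℝ)^α < (5:ℝ)^α * (7:ℝ)^α := by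
    rw [h36, h35]; exact rpow_base_lt (by norm_num) (by norm_num) hα
  have : 2 * (6:ℝ)^α < (5:ℝ)^α + (7:ℝ)^α := by
    nlinarith [sq_nonneg ((5:ℝ)^α - (7:ℝ)^α), sq_nonneg ((5:ℝ)^α + (7:ℝ)^α - 2*(6:ℝ)^α)]
  unfold g; linarith

lemma f_pos {α : ℝ} (hα : α < 0) (hfg : 0 < f α + g α) : 0 < f α := by
  have := g_neg hα; linarith

lemma fg2_neg {α : ℝ} (hα : α < 0) : f α + 2 * g α < 0 := by
  have h76 : (7:ℝ)^α < (6:ℝ)^α := rpow_base_lt (by norm_num) (by norm_num) hα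
  unfold f g; linarith

lemma hg_lt {α : ℝ} (hα : α < 0) (hfg : 0 < f α + g α) : h α < g α := by
  have h86 : (8:ℝ)^α < (6:ℝ)^α := rpow_base_lt (by norm_num) (by norm_num) hα
  unfold f g h at *; linarith

lemma fh2_neg {α : ℝ} (hα : α < 0) (hfg : 0 < f α + g α) : f α + 2 * h α < 0 := by
  have := fg2_neg hα; have := hg_lt hα hfg; linarith

lemma sum_eq_range_getD (L : List ℕ) :
    L.sum = ∑ j ∈ Finset.range L.length, L.getD j 0 := by
  induction L with
  | nil => simp
  | cons a l ih =>
    rw [List.sum_cons, List.length_cons, Finset.sum_range_succ', ih]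
    simp only [List.getD_cons_succ, List.getD_cons_zero]
    omega

lemma e2_add_i2 (L : List ℕ) :
    e2 L + i2 L
      = ((Finset.range L.length).filter (fun j => L.getD j 0 = 2)).card := by
  classical
  unfold e2 i2
  rw [← Finset.card_filter_add_card_filter_not
    (s := (Finset.range L.length).filter (fun j => L.getD j 0 = 2))
    (p := fun j => j = 0 ∨ j = L.length - 1)]
  rw [Finset.filter_filter, Finset.filter_filter]
  congr 1
  · congr 1; ext j; simp only [Finset.mem_filter]; tauto
  · congr 1; ext j; simp only [Finset.mem_filter]; tauto

lemma getD_mem (L : List ℕ) {j : ℕ} (hj : j < L.length) : L.getD j 0 ∈ L := by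
  rw [List.getD_eq_getElem _ _ hj]; exact List.getElem_mem _

lemma key_bound (L : List ℕ) (h2 : ∀ l ∈ L, 2 ≤ l) :
    3 * L.length ≤ L.sum
      + ((Finset.range L.length).filter (fun j => L.getD j 0 = 2)).card := by
  classical
  rw [sum_eq_range_getD, Finset.card_filter, ← Finset.sum_add_distrib]
  calc 3 * L.length = ∑ _j ∈ Finset.range L.length, 3 := by
        rw [Finset.sum_const, Finset.card_range]; ring
    _ ≤ _ := by
        apply Finset.sum_le_sum
        intro j hj
        rw [Finset.mem_range] at hj
        have hv := h2 _ (getD_mem L hj)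
        by_cases hc : L.getD j 0 = 2
        · rw [if_pos hc, hc]
        · rw [if_neg hc]; omega

lemma key_eq (L : List ℕ) (h2 : ∀ l ∈ L, 2 ≤ l)
    (heq : L.sum
      + ((Finset.range L.length).filter (fun j => L.getD j 0 = 2)).card
      = 3 * L.length) :
    ∀ j < L.length, L.getD j 0 = 2 ∨ L.getD j 0 = 3 := by
  classical
  rw [sum_eq_range_getD, Finset.card_filter, ← Finset.sum_add_distrib] at heq
  have hconst : (3 : ℕ) * L.length = ∑ _j ∈ Finset.range L.length, 3 := by
    rw [Finset.sum_const, Finset.card_range]; ring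
  rw [hconst] at heq
  have hle : ∀ j ∈ Finset.range L.length,
      3 ≤ L.getD j 0 + (if L.getD j 0 = 2 then 1 else 0) := by
    intro j hj
    rw [Finset.mem_range] at hj
    have hv := h2 _ (getD_mem L hj)
    by_cases hc : L.getD j 0 = 2
    · rw [if_pos hc, hc]
    · rw [if_neg hc]; omega
  have hall := (Finset.sum_eq_sum_iff_of_le hle).1 heq.symm
  intro j hj
  have hjj := hall j (Finset.mem_range.2 hj)
  by_cases hc : L.getD j 0 = 2
  · exact Or.inl hc
  · right; rw [if_neg hc] at hjj; omega

lemma two_mul_len_le_sum (L : List ℕ) (h2 : ∀ l ∈ L, 2 ≤ l) :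
    2 * L.length ≤ L.sum := by
  induction L with
  | nil => simp
  | cons a l ih =>
    have ha := h2 a List.mem_cons_self
    have := ih (fun x hx => h2 x (List.mem_cons_of_mem _ hx))
    simp only [List.sum_cons, List.length_cons]
    omega

lemma eq_replicate_of_getD (L : List ℕ) (m : ℕ) (hlen : L.length = m)
    (h3 : ∀ j < m, L.getD j 0 = 3) : L = List.replicate m 3 := by
  apply List.ext_getElem (by simp [hlen])
  intro i h1 h2
  rw [List.getElem_replicate]
  have hv := h3 i (hlen ▸ h1)
  rwa [List.getD_eq_getElem _ _ h1] at hv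

lemma eq_cons_of_getD (L : List ℕ) (m : ℕ) (hm : 2 ≤ m) (hlen : L.length = m)
    (h0 : L.getD 0 0 = 2) (h3 : ∀ j, j ≠ 0 → j < m → L.getD j 0 = 3) :
    L = 2 :: List.replicate (m - 1) 3 := by
  apply List.ext_getElem (by simp [hlen]; omega)
  intro i h1 h2
  match i with
  | 0 =>
    rw [List.getElem_cons_zero, ← List.getD_eq_getElem _ 0 h1]
    exact h0
  | (i+1) =>
    rw [List.getElem_cons_succ, List.getElem_replicate,
      ← List.getD_eq_getElem _ 0 h1]
    exact h3 (i+1) (by omega) (hlen ▸ h1)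

lemma eq_append_of_getD (L : List ℕ) (m : ℕ) (hm : 2 ≤ m) (hlen : L.length = m)
    (hlast : L.getD (m-1) 0 = 2) (h3 : ∀ j, j ≠ m - 1 → j < m → L.getD j 0 = 3) :
    L = List.replicate (m - 1) 3 ++ [2] := by
  apply List.ext_getElem (by simp [hlen]; omega)
  intro i h1 h2
  rw [← List.getD_eq_getElem _ 0 h1]
  by_cases hi : i < m - 1
  · rw [List.getElem_append_left (by simpa using hi), List.getElem_replicate]
    exact h3 i (by omega) (by omega)
  · have hieq : i = m - 1 := by have := hlen ▸ h1; omega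
    subst hieq
    rw [List.getElem_append_right (by simp)]
    simp only [List.length_replicate, Nat.sub_self, List.getElem_cons_zero]
    exact hlast

lemma getD_replicate' (k j : ℕ) (hj : j < k) : (List.replicate k 3).getD j 0 = 3 := by
  rw [List.getD_eq_getElem _ _ (by simpa using hj), List.getElem_replicate]

lemma getD_cons_list (m j : ℕ) (hm : 2 ≤ m) (hj : j < m) :
    (2 :: List.replicate (m-1) 3).getD j 0 = if j = 0 then 2 else 3 := by
  match j with
  | 0 => simp
  | (j+1) =>
    rw [List.getD_cons_succ, if_neg (by omega)]
    exact getD_replicate' _ _ (by omega)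

lemma getD_append_list (m j : ℕ) (hm : 2 ≤ m) (hj : j < m) :
    (List.replicate (m-1) 3 ++ [2]).getD j 0 = if j = m - 1 then 2 else 3 := by
  have hlen : (List.replicate (m-1) 3 ++ [2]).length = m := by simp; omega
  rw [List.getD_eq_getElem _ _ (by omega)]
  by_cases hi : j < m - 1
  · rw [List.getElem_append_left (by simpa using hi), List.getElem_replicate,
      if_neg (by omega)]
  · have : j = m - 1 := by omega
    subst this
    rw [List.getElem_append_right (by simp)]
    simp only [List.length_replicate, Nat.sub_self, List.getElem_cons_zero, if_pos]

lemma e2_replicate (k : ℕ) : e2 (List.replicate k 3) = 0 := by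
  unfold e2
  rw [Finset.filter_false_of_mem, Finset.card_empty]
  intro j hj
  rw [Finset.mem_range, List.length_replicate] at hj
  rw [getD_replicate' _ _ hj]
  rintro ⟨-, hc⟩; exact absurd hc (by norm_num)

lemma i2_replicate (k : ℕ) : i2 (List.replicate k 3) = 0 := by
  unfold i2
  rw [Finset.filter_false_of_mem, Finset.card_empty]
  intro j hj
  rw [Finset.mem_range, List.length_replicate] at hj
  rw [getD_replicate' _ _ hj]
  rintro ⟨-, -, hc⟩; exact absurd hc (by norm_num)

lemma len_cons_list (m : ℕ) (hm : 2 ≤ m) : (2 :: List.replicate (m-1) 3).length = m := by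
  simp; omega

lemma e2_cons (m : ℕ) (hm : 2 ≤ m) : e2 (2 :: List.replicate (m-1) 3) = 1 := by
  unfold e2
  rw [len_cons_list m hm]
  have : (Finset.range m).filter
      (fun j => (j = 0 ∨ j = m - 1) ∧ (2 :: List.replicate (m-1) 3).getD j 0 = 2) = {0} := by
    ext j
    simp only [Finset.mem_filter, Finset.mem_range, Finset.mem_singleton]
    constructor
    · rintro ⟨hj, hor, hv⟩
      rw [getD_cons_list m j hm hj] at hv
      by_contra hne
      rw [if_neg hne] at hv; exact absurd hv (by norm_num)
    · rintro rfl
      exact ⟨by omega, Or.inl rfl, by rw [getD_cons_list m 0 hm (by omega)]; simp⟩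
  rw [this, Finset.card_singleton]

lemma i2_cons (m : ℕ) (hm : 2 ≤ m) : i2 (2 :: List.replicate (m-1) 3) = 0 := by
  unfold i2
  rw [len_cons_list m hm, Finset.filter_false_of_mem, Finset.card_empty]
  intro j hj
  rw [Finset.mem_range] at hj
  rintro ⟨h0, -, hv⟩
  rw [getD_cons_list m j hm hj, if_neg h0] at hv
  exact absurd hv (by norm_num)

lemma len_append_list (m : ℕ) (hm : 2 ≤ m) : (List.replicate (m-1) 3 ++ [2]).length = m := by
  simp; omega

lemma e2_append (m : ℕ) (hm : 2 ≤ m) : e2 (List.replicate (m-1) 3 ++ [2]) = 1 := by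
  unfold e2
  rw [len_append_list m hm]
  have : (Finset.range m).filter
      (fun j => (j = 0 ∨ j = m - 1) ∧ (List.replicate (m-1) 3 ++ [2]).getD j 0 = 2) = {m-1} := by
    ext j
    simp only [Finset.mem_filter, Finset.mem_range, Finset.mem_singleton]
    constructor
    · rintro ⟨hj, hor, hv⟩
      rw [getD_append_list m j hm hj] at hv
      by_contra hne
      rw [if_neg hne] at hv; exact absurd hv (by norm_num)
    · rintro rfl
      exact ⟨by omega, Or.inr rfl, by rw [getD_append_list m (m-1) hm (by omega)]; simp⟩
  rw [this, Finset.card_singleton]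

lemma i2_append (m : ℕ) (hm : 2 ≤ m) : i2 (List.replicate (m-1) 3 ++ [2]) = 0 := by
  unfold i2
  rw [len_append_list m hm, Finset.filter_false_of_mem, Finset.card_empty]
  intro j hj
  rw [Finset.mem_range] at hj
  rintro ⟨-, h1, hv⟩
  rw [getD_append_list m j hm hj, if_neg h1] at hv
  exact absurd hv (by norm_num)

lemma psi_replicate (α : ℝ) (k : ℕ) : psi α (List.replicate k 3) = f α * k := by
  unfold psi
  rw [e2_replicate, i2_replicate, List.length_replicate]
  push_cast; ring

lemma psi_cons (α : ℝ) (m : ℕ) (hm : 2 ≤ m) :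
    psi α (2 :: List.replicate (m-1) 3) = f α * m + g α := by
  unfold psi
  rw [e2_cons m hm, i2_cons m hm, len_cons_list m hm]
  push_cast; ring

lemma psi_append (α : ℝ) (m : ℕ) (hm : 2 ≤ m) :
    psi α (List.replicate (m-1) 3 ++ [2]) = f α * m + g α := by
  unfold psi
  rw [e2_append m hm, i2_append m hm, len_append_list m hm]
  push_cast; ring

end Helpers

set_option maxHeartbeats 1600000 in
/-- Proposition 4, third part: if α < 0 and f(α) + g(α) > 0, then for every
length vector with square count n ≥ 3:
(a) n odd: Ψ_α(L) ≤ f(α)·(n−1)/2, with equality iff L = (3,…,3) with (n−1)/2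
entries; (b) n even: Ψ_α(L) ≤ f(α)·(n/2) + g(α), with equality iff
L = (2,3,…,3) or (3,…,3,2) with n/2 entries. -/
theorem psi_le_of_fg_pos (α : ℝ) (hα : α < 0) (hfg : 0 < f α + g α)
    (L : List ℕ) (hL : LengthVector L) (n : ℕ) (hn : nSq L = n) (hn3 : 3 ≤ n) :
    (Odd n → psi α L ≤ f α * (((n - 1) / 2 : ℕ) : ℝ) ∧
      (psi α L = f α * (((n - 1) / 2 : ℕ) : ℝ) ↔
        L = List.replicate ((n - 1) / 2) 3)) ∧
    (Even n → psi α L ≤ f α * ((n / 2 : ℕ) : ℝ) + g α ∧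
      (psi α L = f α * ((n / 2 : ℕ) : ℝ) + g α ↔
        L = 2 :: List.replicate (n / 2 - 1) 3 ∨
        L = List.replicate (n / 2 - 1) 3 ++ [2])) := by
  obtain ⟨hne, h2⟩ := hL
  have hs1 : 1 ≤ L.length := List.length_pos_iff.2 hne
  have hsum2 : 2 * L.length ≤ L.sum := two_mul_len_le_sum L h2
  have hsum : L.sum + 1 = n + L.length := by
    unfold nSq at hn; omega
  have hkey := key_bound L h2
  have hEI := e2_add_i2 L
  have hcon : 2 * L.length + 1 ≤ n + (e2 L + i2 L) := by omega
  have hf := f_pos hα hfg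
  have hfg2 := fg2_neg hα
  have hfh2 := fh2_neg hα hfg
  have hhg := hg_lt hα hfg
  have hE0 : (0:ℝ) ≤ (e2 L : ℝ) := Nat.cast_nonneg _
  have hI0 : (0:ℝ) ≤ (i2 L : ℝ) := Nat.cast_nonneg _
  have hpsi : psi α L = f α * L.length + g α * e2 L + h α * i2 L := rfl
  constructor
  · -- odd case
    intro hodd
    obtain ⟨m, hm⟩ := hodd
    have hm2 : (n - 1) / 2 = m := by omega
    rw [hm2]
    have hm1 : 1 ≤ m := by omega
    have hconN : 2 * L.length ≤ 2 * m + (e2 L + i2 L) := by omega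
    have hconR : 2 * (L.length : ℝ) ≤ 2 * m + (e2 L : ℝ) + (i2 L : ℝ) := by
      have := (Nat.cast_le (α := ℝ)).2 hconN
      push_cast at this ⊢
      linarith
    have t1 : 0 ≤ f α * (2*(m:ℝ) + (e2 L : ℝ) + (i2 L : ℝ) - 2*(L.length : ℝ)) :=
      mul_nonneg hf.le (by linarith)
    have t2 : 0 ≤ (-(f α + 2*g α)) * (e2 L : ℝ) := mul_nonneg (by linarith) hE0
    have t3 : 0 ≤ (-(f α + 2*h α)) * (i2 L : ℝ) := mul_nonneg (by linarith) hI0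
    have hid : f α * (2*(m:ℝ) + (e2 L : ℝ) + (i2 L : ℝ) - 2*(L.length : ℝ))
        + (-(f α + 2*g α)) * (e2 L : ℝ) + (-(f α + 2*h α)) * (i2 L : ℝ)
        = 2 * (f α * (m:ℝ) - psi α L) := by
      rw [hpsi]; ring
    refine ⟨by linarith, ?_, ?_⟩
    · intro heq
      rw [heq] at hid
      have h1z : f α * (2*(m:ℝ) + (e2 L : ℝ) + (i2 L : ℝ) - 2*(L.length : ℝ)) = 0 := by
        linarith
      have h2z : (-(f α + 2*g α)) * (e2 L : ℝ) = 0 := by linarith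
      have h3z : (-(f α + 2*h α)) * (i2 L : ℝ) = 0 := by linarith
      have hEz : e2 L = 0 := by
        rcases mul_eq_zero.1 h2z with hc | hc
        · linarith
        · exact_mod_cast hc
      have hIz : i2 L = 0 := by
        rcases mul_eq_zero.1 h3z with hc | hc
        · linarith
        · exact_mod_cast hc
      have hlenR : (L.length : ℝ) = (m : ℝ) := by
        rcases mul_eq_zero.1 h1z with hc | hc
        · linarith
        · rw [hEz, hIz] at hc; push_cast at hc; linarith
      have hlen : L.length = m := by exact_mod_cast hlenR
      have hk0 : ((Finset.range L.length).filter (fun j => L.getD j 0 = 2)).card = 0 := by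
        omega
      have hsum3 : L.sum + ((Finset.range L.length).filter (fun j => L.getD j 0 = 2)).card
          = 3 * L.length := by omega
      have hent := key_eq L h2 hsum3
      have hno2 : ∀ j < L.length, L.getD j 0 ≠ 2 := by
        intro j hj hc
        have : j ∈ (Finset.range L.length).filter (fun j => L.getD j 0 = 2) :=
          Finset.mem_filter.2 ⟨Finset.mem_range.2 hj, hc⟩
        rw [Finset.card_eq_zero.1 hk0] at this
        exact absurd this (Finset.notMem_empty j)
      exact eq_replicate_of_getD L m hlen (fun j hj => by
        rcases hent j (hlen ▸ hj) with hc | hc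
        · exact absurd hc (hno2 j (hlen ▸ hj))
        · exact hc)
    · intro hrep
      rw [hrep, psi_replicate]
  · -- even case
    intro heven
    obtain ⟨m, hm⟩ := heven
    have hm2 : n / 2 = m := by omega
    rw [hm2]
    have hmge : 2 ≤ m := by omega
    have hback : (L = 2 :: List.replicate (m-1) 3 ∨ L = List.replicate (m-1) 3 ++ [2]) →
        psi α L = f α * m + g α := by
      rintro (hc | hc)
      · rw [hc, psi_cons α m hmge]
      · rw [hc, psi_append α m hmge]
    rcases Nat.eq_zero_or_pos (e2 L) with hE | hE
    · rcases Nat.eq_zero_or_pos (i2 L) with hI | hI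
      · -- E = 0, I = 0 : strict
        have hsle : L.length + 1 ≤ m := by omega
        have hsleR : (L.length : ℝ) ≤ (m : ℝ) - 1 := by
          have := (Nat.cast_le (α := ℝ)).2 hsle
          push_cast at this; linarith
        have hstrict : psi α L < f α * m + g α := by
          rw [hpsi, hE, hI]
          push_cast
          have := mul_le_mul_of_nonneg_left hsleR hf.le
          nlinarith
        refine ⟨hstrict.le, fun heq => absurd heq hstrict.ne, fun hc => absurd (hback hc) hstrict.ne⟩
      · -- E = 0, I ≥ 1 : strict
        have hpsi' : psi α L = f α * L.length + h α * i2 L := by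
          rw [hpsi, hE]; push_cast; ring
        have hconR : 2 * (L.length : ℝ) ≤ 2*(m:ℝ) - 1 + (i2 L : ℝ) := by
          have hN : 2 * L.length + 1 ≤ 2 * m + i2 L := by omega
          have := (Nat.cast_le (α := ℝ)).2 hN
          push_cast at this; linarith
        have hI1 : (1:ℝ) ≤ (i2 L : ℝ) := by exact_mod_cast hI
        have t1 : 0 ≤ f α * (2*(m:ℝ) - 1 + (i2 L : ℝ) - 2*(L.length : ℝ)) :=
          mul_nonneg hf.le (by linarith)
        have t2 : 0 ≤ (-(f α + 2*h α)) * ((i2 L : ℝ) - 1) :=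
          mul_nonneg (by linarith) (by linarith)
        have hid2 : f α * (2*(m:ℝ) - 1 + (i2 L : ℝ) - 2*(L.length : ℝ))
            + (-(f α + 2*h α)) * ((i2 L : ℝ) - 1)
            = 2 * (f α * (m:ℝ) + h α - psi α L) := by
          rw [hpsi']; ring
        have hstrict : psi α L < f α * m + g α := by linarith
        refine ⟨hstrict.le, fun heq => absurd heq hstrict.ne, fun hc => absurd (hback hc) hstrict.ne⟩
    · -- E ≥ 1 : main case
      have hE1 : (1:ℝ) ≤ (e2 L : ℝ) := by exact_mod_cast hE
      have hconR : 2 * (L.length : ℝ) ≤ 2*(m:ℝ) - 1 + (e2 L : ℝ) + (i2 L : ℝ) := by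
        have hN : 2 * L.length + 1 ≤ 2 * m + (e2 L + i2 L) := by omega
        have := (Nat.cast_le (α := ℝ)).2 hN
        push_cast at this; linarith
      have t1 : 0 ≤ f α * (2*(m:ℝ) - 1 + (e2 L : ℝ) + (i2 L : ℝ) - 2*(L.length : ℝ)) :=
        mul_nonneg hf.le (by linarith)
      have t2 : 0 ≤ (-(f α + 2*g α)) * ((e2 L : ℝ) - 1) :=
        mul_nonneg (by linarith) (by linarith)
      have t3 : 0 ≤ (-(f α + 2*h α)) * (i2 L : ℝ) := mul_nonneg (by linarith) hI0
      have hid3 : f α * (2*(m:ℝ) - 1 + (e2 L : ℝ) + (i2 L : ℝ) - 2*(L.length : ℝ))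
          + (-(f α + 2*g α)) * ((e2 L : ℝ) - 1) + (-(f α + 2*h α)) * (i2 L : ℝ)
          = 2 * (f α * (m:ℝ) + g α - psi α L) := by
        rw [hpsi]; ring
      refine ⟨by linarith, ?_, fun hc => hback hc⟩
      intro heq
      rw [heq] at hid3
      have h1z : f α * (2*(m:ℝ) - 1 + (e2 L : ℝ) + (i2 L : ℝ) - 2*(L.length : ℝ)) = 0 := by
        linarith
      have h2z : (-(f α + 2*g α)) * ((e2 L : ℝ) - 1) = 0 := by linarith
      have h3z : (-(f α + 2*h α)) * (i2 L : ℝ) = 0 := by linarith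
      have hE1' : e2 L = 1 := by
        rcases mul_eq_zero.1 h2z with hc | hc
        · linarith
        · have : (e2 L : ℝ) = 1 := by linarith
          exact_mod_cast this
      have hIz : i2 L = 0 := by
        rcases mul_eq_zero.1 h3z with hc | hc
        · linarith
        · exact_mod_cast hc
      have hE1R : (e2 L : ℝ) = 1 := by exact_mod_cast hE1'
      have hIzR : (i2 L : ℝ) = 0 := by exact_mod_cast hIz
      have hlenR : (L.length : ℝ) = (m : ℝ) := by
        rcases mul_eq_zero.1 h1z with hc | hc
        · linarith
        · rw [hE1R, hIzR] at hc; linarith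
      have hlen : L.length = m := by exact_mod_cast hlenR
      have hk1 : ((Finset.range L.length).filter (fun j => L.getD j 0 = 2)).card = 1 := by
        omega
      have hsum3 : L.sum + ((Finset.range L.length).filter (fun j => L.getD j 0 = 2)).card
          = 3 * L.length := by omega
      have hent := key_eq L h2 hsum3
      -- extract the unique index with value 2
      obtain ⟨j0, hj0⟩ := Finset.card_eq_one.1 hk1
      obtain ⟨j1, hj1⟩ := Finset.card_eq_one.1 (by unfold e2 at hE1'; exact hE1')
      have hj1mem : j1 ∈ (Finset.range L.length).filter
          (fun j => (j = 0 ∨ j = L.length - 1) ∧ L.getD j 0 = 2) := by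
        rw [hj1]; exact Finset.mem_singleton_self j1
      rw [Finset.mem_filter, Finset.mem_range] at hj1mem
      obtain ⟨hj1lt, hj1or, hj1v⟩ := hj1mem
      have hj1k : j1 ∈ (Finset.range L.length).filter (fun j => L.getD j 0 = 2) :=
        Finset.mem_filter.2 ⟨Finset.mem_range.2 hj1lt, hj1v⟩
      rw [hj0, Finset.mem_singleton] at hj1k
      have hother : ∀ j, j < L.length → j ≠ j1 → L.getD j 0 = 3 := by
        intro j hj hne
        rcases hent j hj with hc | hc
        · exfalso
          have : j ∈ (Finset.range L.length).filter (fun j => L.getD j 0 = 2) :=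
            Finset.mem_filter.2 ⟨Finset.mem_range.2 hj, hc⟩
          rw [hj0, Finset.mem_singleton] at this
          exact hne (this.trans hj1k.symm)
        · exact hc
      rcases hj1or with hj1z | hj1last
      · left
        subst hj1z
        exact eq_cons_of_getD L m hmge hlen hj1v
          (fun j hjne hjm => hother j (hlen ▸ hjm) hjne)
      · right
        rw [hlen] at hj1last
        subst hj1last
        refine eq_append_of_getD L m hmge hlen hj1v ?_
        intro j hjne hjm
        exact hother j (by omega) (by omega)
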